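/- Let X, Y and Z be pairwise edge-disjoint graphs, each with at least one edge, with orderings ℓ_X, ℓ_Y and ℓ_Z respectively. Then ms(ℓ_X ∨ ℓ_Y ∨ ℓ_Z) ≥ min{ ms(ℓ_X ∨ ℓ_Y), ms(ℓ_Y ∨ ℓ_Z), |E(Y)| + ms(ℓ_X ∨ ℓ_Z) }. -/

import Mathlib

open SimpleGraph

/-- Two edges are adjacent if they are distinct and share a vertex. -/
def EdgesAdj {V : Type*} (e e' : Sym2 V) : Prop :=
  e ≠ e' ∧ ∃ v : V, v ∈ e ∧ v ∈ e'

/-- `ms` of an ordering of a graph, the ordering being given as the list of edges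
in increasing label order: the largest `s ∈ {1,…,m}` such that any ordered pair of
adjacent edges `(e,e')` with `ℓ(e) < ℓ(e')` has forward distance at least `s`. -/
noncomputable def msList {V : Type*} (L : List (Sym2 V)) : ℕ :=
  sSup {s | 1 ≤ s ∧ s ≤ L.length ∧ ∀ i j e e', i < j →
    L[i]? = some e → L[j]? = some e' → EdgesAdj e e' → s ≤ j - i}

/-- `cms` of an ordering of a graph: the largest `s ∈ {1,…,m}` such that every pair of
adjacent edges is at cyclic distance at least `s`. -/
noncomputable def cmsList {V : Type*} (L : List (Sym2 V)) : ℕ :=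
  sSup {s | 1 ≤ s ∧ s ≤ L.length ∧ ∀ i j e e', i < j →
    L[i]? = some e → L[j]? = some e' → EdgesAdj e e' →
    s ≤ min (j - i) (L.length - (j - i))}

/-- `L` is an ordering of `G`: it lists every edge of `G` exactly once. -/
def IsOrdering {V : Type*} (G : SimpleGraph V) (L : List (Sym2 V)) : Prop :=
  L.Nodup ∧ ∀ e, e ∈ L ↔ e ∈ G.edgeSet

/-- Cyclic matching sequenceability of a graph: the maximum of `cmsList` over orderings. -/
noncomputable def cms {V : Type*} (G : SimpleGraph V) : ℕ :=
  sSup {k | ∃ L, IsOrdering G L ∧ cmsList L = k}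

/-- Number of edges of a graph. -/
noncomputable def numEdges {V : Type*} (G : SimpleGraph V) : ℕ :=
  Nat.card G.edgeSet

/-- The chromatic index: the least number of colours in a proper edge colouring. -/
noncomputable def chromaticIndex {V : Type*} (G : SimpleGraph V) : ℕ :=
  sInf {c | ∃ f : G.edgeSet → Fin c, ∀ e e' : G.edgeSet, EdgesAdj e.1 e'.1 → f e ≠ f e'}

/-- The edge set of `G` forms a matching (no two distinct edges share a vertex). -/
def IsMatchingGraph {V : Type*} (G : SimpleGraph V) : Prop :=
  ∀ e ∈ G.edgeSet, ∀ e' ∈ G.edgeSet, ¬ EdgesAdj e e'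

/-- `G` is regular of degree `d`. -/
def IsRegularGraph {V : Type*} (G : SimpleGraph V) (d : ℕ) : Prop :=
  ∀ v : V, Nat.card (G.neighborSet v) = d

/-- A finite set of edges of `G` forming a matching. -/
def IsMatchingSet {V : Type*} (G : SimpleGraph V) (M : Finset (Sym2 V)) : Prop :=
  ↑M ⊆ G.edgeSet ∧ ∀ e ∈ M, ∀ e' ∈ M, ¬ EdgesAdj e e'

/-- The matching number of a graph. -/
noncomputable def matchingNumber {V : Type*} (G : SimpleGraph V) : ℕ :=
  sSup {k | ∃ M : Finset (Sym2 V), IsMatchingSet G M ∧ M.card = k}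

namespace MsAux

def msSet {V : Type*} (L : List (Sym2 V)) : Set ℕ :=
  {s | 1 ≤ s ∧ s ≤ L.length ∧ ∀ i j e e', i < j →
    L[i]? = some e → L[j]? = some e' → EdgesAdj e e' → s ≤ j - i}

lemma msList_eq {V : Type*} (L : List (Sym2 V)) : msList L = sSup (msSet L) := rfl

lemma bdd {V : Type*} (L : List (Sym2 V)) : BddAbove (msSet L) :=
  ⟨L.length, fun _ hs => hs.2.1⟩

lemma one_mem {V : Type*} (L : List (Sym2 V)) (h : L ≠ []) : 1 ∈ msSet L := by
  refine ⟨le_refl 1, List.length_pos_iff.mpr h, ?_⟩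
  intro i j e e' hij _ _ _; omega

lemma msList_mem {V : Type*} (L : List (Sym2 V)) (h : L ≠ []) : msList L ∈ msSet L :=
  Nat.sSup_mem ⟨1, one_mem L h⟩ (bdd L)

end MsAux

/-- Lemma: for pairwise edge-disjoint graphs `X`, `Y`, `Z` with orderings `ℓ_X`, `ℓ_Y`,
`ℓ_Z`, we have
`ms(ℓ_X ∨ ℓ_Y ∨ ℓ_Z) ≥ min{ms(ℓ_X ∨ ℓ_Y), ms(ℓ_Y ∨ ℓ_Z), |E(Y)| + ms(ℓ_X ∨ ℓ_Z)}`. -/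
theorem msList_append_three {V : Type*} [Fintype V] (X Y Z : SimpleGraph V)
    (LX LY LZ : List (Sym2 V))
    (hXY : Disjoint X.edgeSet Y.edgeSet) (hYZ : Disjoint Y.edgeSet Z.edgeSet)
    (hXZ : Disjoint X.edgeSet Z.edgeSet)
    (hXne : X.edgeSet.Nonempty) (hYne : Y.edgeSet.Nonempty) (hZne : Z.edgeSet.Nonempty)
    (hLX : IsOrdering X LX) (hLY : IsOrdering Y LY) (hLZ : IsOrdering Z LZ) :
    min (msList (LX ++ LY)) (min (msList (LY ++ LZ)) (numEdges Y + msList (LX ++ LZ)))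
      ≤ msList (LX ++ LY ++ LZ) := by
  classical
  obtain ⟨ex, hex⟩ := hXne
  obtain ⟨ey, hey⟩ := hYne
  obtain ⟨ez, hez⟩ := hZne
  have hLXne : LX ≠ [] := by
    intro h; have := (hLX.2 ex).mpr hex; simp [h] at this
  have hLYne : LY ≠ [] := by
    intro h; have := (hLY.2 ey).mpr hey; simp [h] at this
  have hLZne : LZ ≠ [] := by
    intro h; have := (hLZ.2 ez).mpr hez; simp [h] at this
  have hb : numEdges Y = LY.length := by
    have hset : Y.edgeSet = ↑LY.toFinset := by
      ext e; simp [← hLY.2 e]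
    rw [numEdges, hset, Nat.card_coe_set_eq, Set.ncard_coe_finset,
      List.toFinset_card_of_nodup hLY.1]
  have h1 := MsAux.msList_mem (LX ++ LY) (by simp [hLXne])
  have h2 := MsAux.msList_mem (LY ++ LZ) (by simp [hLYne])
  have h3 := MsAux.msList_mem (LX ++ LZ) (by simp [hLXne])
  set a := LX.length with ha
  set b := LY.length with hbb
  set c := LZ.length with hc
  set m := min (msList (LX ++ LY)) (min (msList (LY ++ LZ)) (numEdges Y + msList (LX ++ LZ)))
    with hm
  have hlen1 : (LX ++ LY).length = a + b := by simp [ha, hbb]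
  have hlen2 : (LY ++ LZ).length = b + c := by simp [hbb, hc]
  have hlen3 : (LX ++ LZ).length = a + c := by simp [ha, hc]
  have hmem : m ∈ MsAux.msSet (LX ++ LY ++ LZ) := by
    refine ⟨?_, ?_, ?_⟩
    · have := h1.1; have := h2.1; have := h3.1; omega
    · have := h1.2.1; rw [hlen1] at this
      simp only [List.length_append]
      omega
    · intro i j e e' hij hi hj hadj
      by_cases hjab : j < a + b
      · have hiab : i < a + b := lt_trans hij hjab
        rw [show LX ++ LY ++ LZ = (LX ++ LY) ++ LZ from rfl,
          List.getElem?_append_left (by rw [hlen1]; exact hiab)] at hi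
        rw [show LX ++ LY ++ LZ = (LX ++ LY) ++ LZ from rfl,
          List.getElem?_append_left (by rw [hlen1]; exact hjab)] at hj
        have := h1.2.2 i j e e' hij hi hj hadj
        omega
      · by_cases hia : i < a
        · -- i in X, j in Z
          rw [show LX ++ LY ++ LZ = (LX ++ LY) ++ LZ from rfl,
            List.getElem?_append_left (by rw [hlen1]; omega),
            List.getElem?_append_left hia] at hi
          rw [show LX ++ LY ++ LZ = (LX ++ LY) ++ LZ from rfl,
            List.getElem?_append_right (by rw [hlen1]; omega)] at hj
          rw [hlen1] at hj
          have hi' : (LX ++ LZ)[i]? = some e := by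
            rw [List.getElem?_append_left hia]; exact hi
          have hj' : (LX ++ LZ)[j - b]? = some e' := by
            rw [List.getElem?_append_right (by omega)]
            rw [show j - b - a = j - (a + b) from by omega]
            exact hj
          have := h3.2.2 i (j - b) e e' (by omega) hi' hj' hadj
          omega
        · -- i, j both in LY ++ LZ part
          rw [List.append_assoc] at hi hj
          rw [List.getElem?_append_right (by omega)] at hi
          rw [List.getElem?_append_right (by omega)] at hj
          have := h2.2.2 (i - a) (j - a) e e' (by omega) hi hj hadj
          omega
  calc m ≤ sSup (MsAux.msSet (LX ++ LY ++ LZ)) := le_csSup (MsAux.bdd _) hmem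
    _ = msList (LX ++ LY ++ LZ) := rfl
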